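/- For b invertible in B with g_a(b) invertible and norms in the appropriate range, the R-transform satisfies R_a(g_a(b)) = E(a(1−ba)⁻¹)·(E((1−ba)⁻¹))⁻¹. In particular the right-hand side extends R_a∘g_a to non-invertible b with ‖b‖ < 1/(2‖a‖). -/

import Mathlib

/-- `g_a(b) = b ⬝ E((1 - ab)⁻¹)`. -/
noncomputable def gA {A : Type*} [NormedRing A] [NormedAlgebra ℂ A] [CompleteSpace A]
    (E : A →L[ℂ] A) (a b : A) : A :=
  b * E (Ring.inverse (1 - a * b))

/-- For invertible `b`, `R_a(g_a(b)) = b⁻¹ - g_a(b)⁻¹` equals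
`E(a(1-ba)⁻¹) ⬝ (E((1-ba)⁻¹))⁻¹`, which makes sense even for non-invertible `b`. -/
theorem stmt10 {A : Type*} [NormedRing A] [NormedAlgebra ℂ A] [CompleteSpace A]
    (B : Subalgebra ℂ A) (hB : IsClosed (B : Set A))
    (E : A →L[ℂ] A) (hrange : ∀ x : A, E x ∈ B) (hfix : ∀ x ∈ B, E x = x)
    (hnorm : ∀ x : A, ‖E x‖ ≤ ‖x‖)
    (hbimod : ∀ b₁ ∈ B, ∀ b₂ ∈ B, ∀ x : A, E (b₁ * x * b₂) = b₁ * E x * b₂)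
    (a : A) (ha : a ≠ 0) (b : A) (hbB : b ∈ B) (hb : ‖b‖ < 1 / (2 * ‖a‖))
    (hbinv : ∃ c ∈ B, b * c = 1 ∧ c * b = 1)
    (hginv : ∃ c ∈ B, gA E a b * c = 1 ∧ c * gA E a b = 1) :
    Ring.inverse b - Ring.inverse (gA E a b) =
      E (a * Ring.inverse (1 - b * a)) * Ring.inverse (E (Ring.inverse (1 - b * a))) := by
  have hapos : (0:ℝ) < ‖a‖ := norm_pos_iff.mpr ha
  have hb' : ‖a‖ * ‖b‖ < 1 := by
    have := (lt_div_iff₀ (by positivity)).mp hb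
    nlinarith
  have hab : ‖a * b‖ < 1 := lt_of_le_of_lt (norm_mul_le a b) hb'
  have hba : ‖b * a‖ < 1 :=
    lt_of_le_of_lt (norm_mul_le b a) (by rw [mul_comm]; exact hb')
  have huab : IsUnit (1 - a * b) := (Units.oneSub _ hab).isUnit
  have huba : IsUnit (1 - b * a) := (Units.oneSub _ hba).isUnit
  -- b * (1-ab)⁻¹ = (1-ba)⁻¹ * b
  have hswap : b * Ring.inverse (1 - a * b) = Ring.inverse (1 - b * a) * b := by
    have key : (1 - b * a) * b = b * (1 - a * b) := by noncomm_ring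
    calc b * Ring.inverse (1 - a * b)
        = Ring.inverse (1 - b * a) * ((1 - b * a) * b) * Ring.inverse (1 - a * b) := by
          rw [← mul_assoc, Ring.inverse_mul_cancel _ huba, one_mul]
      _ = Ring.inverse (1 - b * a) * b * ((1 - a * b) * Ring.inverse (1 - a * b)) := by
          rw [key]; noncomm_ring
      _ = Ring.inverse (1 - b * a) * b := by
          rw [Ring.mul_inverse_cancel _ huab, mul_one]
  have hEl : ∀ x : A, E (b * x) = b * E x := fun x => by
    have := hbimod b hbB 1 (one_mem B) x; simpa using this
  have hEr : ∀ x : A, E (x * b) = E x * b := fun x => by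
    have := hbimod 1 (one_mem B) b hbB x; simpa using this
  set F := E (Ring.inverse (1 - b * a)) with hF
  have hg : gA E a b = F * b := by
    rw [gA, ← hEl, hswap, hEr]
  -- F - 1 = b * E(a * (1-ba)⁻¹)
  have hF1 : F - 1 = b * E (a * Ring.inverse (1 - b * a)) := by
    have h1 : Ring.inverse (1 - b * a) - 1 = b * (a * Ring.inverse (1 - b * a)) := by
      have h2 : Ring.inverse (1 - b * a) - (1 - b * a) * Ring.inverse (1 - b * a)
          = b * (a * Ring.inverse (1 - b * a)) := by noncomm_ring
      rw [← h2, Ring.mul_inverse_cancel _ huba]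
    rw [← hEl, ← h1, hF, map_sub, hfix 1 (one_mem B)]
  have hbu : IsUnit b := by
    obtain ⟨c, _, h1, h2⟩ := hbinv; exact ⟨⟨b, c, h1, h2⟩, rfl⟩
  have hgu : IsUnit (gA E a b) := by
    obtain ⟨c, _, h1, h2⟩ := hginv; exact ⟨⟨_, c, h1, h2⟩, rfl⟩
  have hFu : IsUnit F := by
    have hFe : F = gA E a b * Ring.inverse b := by
      rw [hg, mul_assoc, Ring.mul_inverse_cancel _ hbu, mul_one]
    rw [hFe]; exact hgu.mul hbu.ringInverse
  have hinvFb : Ring.inverse (F * b) = Ring.inverse b * Ring.inverse F := by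
    obtain ⟨uF, huF⟩ := hFu
    obtain ⟨ub, hub⟩ := hbu
    rw [← huF, ← hub, ← Units.val_mul, Ring.inverse_unit, Ring.inverse_unit,
      Ring.inverse_unit, mul_inv_rev, Units.val_mul]
  have hE : E (a * Ring.inverse (1 - b * a)) = Ring.inverse b * (F - 1) := by
    rw [hF1, ← mul_assoc, Ring.inverse_mul_cancel _ hbu, one_mul]
  rw [hg, hinvFb, hE]
  have h3 : Ring.inverse b * (F - 1) * Ring.inverse F
      = Ring.inverse b * (F * Ring.inverse F) - Ring.inverse b * Ring.inverse F := by
    noncomm_ring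
  rw [h3, Ring.mul_inverse_cancel _ hFu, mul_one]
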